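/- If K is a binary sparsity pattern satisfying K G K ≤ K (Boolean operations), then for every r ∈ ℕ, K (G K)^r ≤ K; i.e., quadratic invariance implies closure under all higher-order compositions. -/
import Mathlib


/-- Boolean (OR/AND semiring) matrix multiplication. -/
noncomputable def bmul {a b c : ℕ} (X : Matrix (Fin a) (Fin b) Bool) (Y : Matrix (Fin b) (Fin c) Bool) :
    Matrix (Fin a) (Fin c) Bool :=
  fun i k => Finset.univ.sup fun j => X i j && Y j k

/-- Entrywise Boolean (OR) addition of matrices. -/
def badd {a b : ℕ} (X Y : Matrix (Fin a) (Fin b) Bool) : Matrix (Fin a) (Fin b) Bool :=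
  fun i j => X i j || Y i j

/-- The sequence Z_0 = K, Z_{m+1} = Z_m + Z_m G Z_m. -/
noncomputable def Zseq {nu ny : ℕ} (K : Matrix (Fin nu) (Fin ny) Bool) (G : Matrix (Fin ny) (Fin nu) Bool) :
    ℕ → Matrix (Fin nu) (Fin ny) Bool
  | 0 => K
  | m + 1 => badd (Zseq K G m) (bmul (bmul (Zseq K G m) G) (Zseq K G m))

/-- kterm K G s = K (G K)^s in the Boolean semiring. -/
noncomputable def kterm {nu ny : ℕ} (K : Matrix (Fin nu) (Fin ny) Bool) (G : Matrix (Fin ny) (Fin nu) Bool) :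
    ℕ → Matrix (Fin nu) (Fin ny) Bool
  | 0 => K
  | s + 1 => bmul (kterm K G s) (bmul G K)

/-- Boolean (OR) sum of the matrices f 0, ..., f (N-1). -/
noncomputable def bsum {a b : ℕ} (N : ℕ) (f : ℕ → Matrix (Fin a) (Fin b) Bool) :
    Matrix (Fin a) (Fin b) Bool :=
  fun i j => (Finset.range N).sup fun s => f s i j

/-- Number of nonzero (true) entries. -/
def ncount {a b : ℕ} (Z : Matrix (Fin a) (Fin b) Bool) : ℕ :=
  ∑ i : Fin a, ∑ j : Fin b, if Z i j then 1 else 0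

lemma bool_le_of_imp {x y : Bool} (h : x = true → y = true) : x ≤ y := by
  cases x
  · exact Bool.false_le y
  · simp [h rfl]

lemma bmul_eq_true_iff {a b c : ℕ} (X : Matrix (Fin a) (Fin b) Bool) (Y : Matrix (Fin b) (Fin c) Bool)
    (i : Fin a) (k : Fin c) :
    bmul X Y i k = true ↔ ∃ j, X i j = true ∧ Y j k = true := by
  simp only [bmul]
  rw [show (true : Bool) = ⊤ from rfl, Finset.sup_eq_top_iff]
  simp

theorem stmt18 {nu ny : ℕ} (K : Matrix (Fin nu) (Fin ny) Bool)
    (G : Matrix (Fin ny) (Fin nu) Bool)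
    (hQI : ∀ k l, bmul (bmul K G) K k l ≤ K k l) :
    ∀ (r : ℕ) (k : Fin nu) (l : Fin ny), kterm K G r k l ≤ K k l := by
  intro r
  induction r with
  | zero => intro k l; exact le_rfl
  | succ s ih =>
    intro k l
    refine le_trans (bool_le_of_imp ?_) (hQI k l)
    intro h
    obtain ⟨j, h1, h2⟩ := (bmul_eq_true_iff _ _ _ _).1 h
    obtain ⟨m, h3, h4⟩ := (bmul_eq_true_iff _ _ _ _).1 h2
    have hKj : K k j = true := by
      have := ih k j; rw [h1] at this; exact (Bool.eq_true_of_true_le this)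
    refine (bmul_eq_true_iff _ _ _ _).2 ⟨m, ?_, h4⟩
    exact (bmul_eq_true_iff _ _ _ _).2 ⟨j, hKj, h3⟩
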